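/- (Stone–Weierstrass for Clifford-valued functions, even case.) Suppose n = p + q is even. Let Cl = ℝ_{p,q} be equipped with its canonical topology as a finite-dimensional real vector space (i.e. a topology making it a topological ring and for which the ℝ-module topology condition IsModuleTopology ℝ Cl holds). Let Y be a compact Hausdorff topological space and let A be an ℝ-subalgebra of the algebra C(Y, Cl) of continuous functions from Y to Cl such that A contains every constant function (with arbitrary value in Cl) and A separates the points of Y (for all x ≠ y in Y there exists f ∈ A with f x ≠ f y). Then A is dense in C(Y, Cl) for the topology of uniform convergence (equivalently, the topological closure of A is all of C(Y, Cl)). -/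

import Mathlib

noncomputable section

/-- The weights of the quadratic form of signature `(p, q)`: `1` for the first `p`
coordinates and `-1` for the remaining ones. -/
def cliffordWeight (p : ℕ) {n : ℕ} (i : Fin n) : ℝ := if (i : ℕ) < p then 1 else -1

/-- The quadratic form of signature `(p, q)` on `Fin (p + q) → ℝ`. -/
def cliffordQ (p q : ℕ) : QuadraticForm ℝ (Fin (p + q) → ℝ) :=
  QuadraticMap.weightedSumSquares ℝ (cliffordWeight p)

/-- The generator `e i` of the Clifford algebra `ℝ_{p,q}`. -/
def cliffordE (p q : ℕ) (i : Fin (p + q)) : CliffordAlgebra (cliffordQ p q) :=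
  CliffordAlgebra.ι (cliffordQ p q) (Pi.single i 1)

/-- `e_J`: the product of the generators `e j` for `j ∈ J`, in increasing order. -/
def eLower (p q : ℕ) (J : Finset (Fin (p + q))) : CliffordAlgebra (cliffordQ p q) :=
  ((J.sort (· ≤ ·)).map (cliffordE p q)).prod

/-- `e^J`: the product of the elements `w j • e j` for `j ∈ J`, in decreasing order. -/
def eUpper (p q : ℕ) (J : Finset (Fin (p + q))) : CliffordAlgebra (cliffordQ p q) :=
  ((J.sort (· ≤ ·)).reverse.map (fun j => cliffordWeight p j • cliffordE p q j)).prod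

namespace SWC

variable (p q : ℕ)

lemma weight_mul_self (i : Fin (p + q)) : cliffordWeight p i * cliffordWeight p i = 1 := by
  unfold cliffordWeight; split <;> norm_num

lemma Q_single (i : Fin (p + q)) : cliffordQ p q (Pi.single i 1) = cliffordWeight p i := by
  rw [cliffordQ, QuadraticMap.weightedSumSquares_apply]
  rw [Finset.sum_eq_single i]
  · simp
  · intro b _ hb; simp [Pi.single_apply, hb]
  · simp

lemma e_sq (i : Fin (p + q)) :
    cliffordE p q i * cliffordE p q i = algebraMap ℝ _ (cliffordWeight p i) := by
  rw [cliffordE, CliffordAlgebra.ι_sq_scalar, Q_single]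

lemma e_anticomm {i j : Fin (p + q)} (hij : i ≠ j) :
    cliffordE p q i * cliffordE p q j = -(cliffordE p q j * cliffordE p q i) := by
  refine CliffordAlgebra.ι_mul_ι_comm_of_isOrtho ?_
  rw [QuadraticMap.isOrtho_def]
  rw [cliffordQ, QuadraticMap.weightedSumSquares_apply, QuadraticMap.weightedSumSquares_apply,
    QuadraticMap.weightedSumSquares_apply, ← Finset.sum_add_distrib]
  refine Finset.sum_congr rfl fun k _ => ?_
  rcases eq_or_ne k i with rfl | hki <;> rcases eq_or_ne k j with rfl | hkj <;>
    simp_all [Pi.single_apply]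


local notation "cE" => cliffordE p q
local notation "cw" => cliffordWeight p

def P (l : List (Fin (p + q))) : CliffordAlgebra (cliffordQ p q) := (l.map cE).prod

lemma P_nil : P p q [] = 1 := rfl
lemma P_cons (a : Fin (p+q)) (l : List (Fin (p+q))) : P p q (a :: l) = cE a * P p q l := by
  simp [P]
lemma P_append (l m : List (Fin (p+q))) : P p q (l ++ m) = P p q l * P p q m := by
  simp [P]

lemma comm_left {i : Fin (p+q)} : ∀ {l : List (Fin (p+q))}, i ∉ l →
    cE i * P p q l = ((-1 : ℝ)^l.length) • (P p q l * cE i)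
  | [], _ => by simp [P_nil]
  | a :: t, hl => by
    have hia : i ≠ a := fun h => hl (h ▸ List.mem_cons_self)
    have hit : i ∉ t := fun h => hl (List.mem_cons_of_mem _ h)
    rw [P_cons, ← mul_assoc, e_anticomm p q hia, neg_mul, mul_assoc, comm_left hit,
      List.length_cons, pow_succ, mul_smul]
    simp [mul_smul_comm, mul_assoc]

lemma rev_g_mul_P (l : List (Fin (p+q))) :
    ((l.reverse.map (fun j => cw j • cE j)).prod) * P p q l = 1 := by
  induction l with
  | nil => simp [P_nil]
  | cons a t ih =>
    rw [List.reverse_cons, List.map_append, List.prod_append, P_cons]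
    simp only [List.map_cons, List.map_nil, List.prod_cons, List.prod_nil, mul_one]
    calc ((t.reverse.map (fun j => cw j • cE j)).prod * (cw a • cE a)) * (cE a * P p q t)
        = (t.reverse.map (fun j => cw j • cE j)).prod * (cw a • (cE a * cE a)) * P p q t := by
          simp only [mul_assoc, smul_mul_assoc, mul_smul_comm]
      _ = (t.reverse.map (fun j => cw j • cE j)).prod * P p q t := by
          rw [e_sq, Algebra.algebraMap_eq_smul_one, smul_smul, weight_mul_self, one_smul, mul_one]
      _ = 1 := ih

lemma P_mul_rev_g (l : List (Fin (p+q))) :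
    P p q l * ((l.reverse.map (fun j => cw j • cE j)).prod) = 1 := by
  induction l with
  | nil => simp [P_nil]
  | cons a t ih =>
    rw [List.reverse_cons, List.map_append, List.prod_append, P_cons]
    simp only [List.map_cons, List.map_nil, List.prod_cons, List.prod_nil, mul_one]
    calc cE a * P p q t * ((t.reverse.map (fun j => cw j • cE j)).prod * (cw a • cE a))
        = cE a * (P p q t * (t.reverse.map (fun j => cw j • cE j)).prod) * (cw a • cE a) := by
          simp only [mul_assoc]
      _ = cE a * (cw a • cE a) := by rw [ih, mul_one]
      _ = 1 := by
          rw [mul_smul_comm, e_sq, Algebra.algebraMap_eq_smul_one, smul_smul, weight_mul_self,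
            one_smul]


lemma e_sq' (i : Fin (p+q)) :
    cE i * cE i = cw i • (1 : CliffordAlgebra (cliffordQ p q)) := by
  rw [e_sq, Algebra.algebraMap_eq_smul_one]

/-- number of entries of `m` different from `i` -/
def cnt (i : Fin (p+q)) (m : List (Fin (p+q))) : ℕ := m.countP (fun j => decide (j ≠ i))

@[simp] lemma cnt_nil (i : Fin (p+q)) : cnt p q i [] = 0 := rfl

lemma cnt_cons_self (i : Fin (p+q)) (t : List (Fin (p+q))) :
    cnt p q i (i :: t) = cnt p q i t := by
  simp [cnt, List.countP_cons]

lemma cnt_cons_ne {a i : Fin (p+q)} (h : a ≠ i) (t : List (Fin (p+q))) :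
    cnt p q i (a :: t) = cnt p q i t + 1 := by
  simp [cnt, List.countP_cons, h]

lemma conj_single (i : Fin (p+q)) : ∀ (m : List (Fin (p+q))),
    cE i * P p q m * (cw i • cE i)
      = ((-1:ℝ)^(cnt p q i m)) • P p q m := by
  intro m
  induction m with
  | nil => simp [P_nil, mul_smul_comm, e_sq', smul_smul, weight_mul_self]
  | cons a t ih =>
    rcases eq_or_ne a i with rfl | hai
    · set σ : ℝ := (-1:ℝ)^(cnt p q a t) with hσ
      have key : P p q t * (cw a • cE a) = σ • (cw a • (cE a * P p q t)) := by
        calc P p q t * (cw a • cE a)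
            = (cw a • (cE a * cE a)) * (P p q t * (cw a • cE a)) := by
              rw [e_sq', smul_smul, weight_mul_self, one_smul, one_mul]
          _ = (cw a • cE a) * (cE a * P p q t * (cw a • cE a)) := by
              simp only [smul_mul_assoc, mul_assoc]
          _ = (cw a • cE a) * (σ • P p q t) := by rw [ih]
          _ = σ • (cw a • (cE a * P p q t)) := by
              simp only [smul_mul_assoc, mul_smul_comm]
      calc cE a * P p q (a :: t) * (cw a • cE a)
          = (cE a * cE a) * (P p q t * (cw a • cE a)) := by
            rw [P_cons]; simp only [mul_assoc]
        _ = (cw a • (1:CliffordAlgebra (cliffordQ p q))) * (σ • (cw a • (cE a * P p q t))) := by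
            rw [e_sq', key]
        _ = σ • (cE a * P p q t) := by
            rw [smul_mul_assoc, one_mul, smul_smul, smul_smul,
              show cw a * σ * cw a = σ * (cw a * cw a) by ring, weight_mul_self, mul_one]
        _ = ((-1:ℝ)^(cnt p q a (a :: t))) • P p q (a :: t) := by
            rw [P_cons, cnt_cons_self]
    · have hia : i ≠ a := hai.symm
      calc cE i * P p q (a :: t) * (cw i • cE i)
          = -(cE a * (cE i * P p q t * (cw i • cE i))) := by
            rw [P_cons, ← mul_assoc, ← mul_assoc, e_anticomm p q hia]
            simp [mul_assoc]
        _ = -(((-1:ℝ)^(cnt p q i t)) • (cE a * P p q t)) := by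
            rw [ih, mul_smul_comm]
        _ = ((-1:ℝ)^(cnt p q i (a :: t))) • P p q (a :: t) := by
            rw [P_cons, cnt_cons_ne p q hai, pow_succ]
            simp [mul_smul]


/-- the sign by which `e_i` conjugates the monomial of `m` -/
def sgn (i : Fin (p+q)) (m : List (Fin (p+q))) : ℝ :=
  (-1:ℝ)^(cnt p q i m)

lemma conj_list (m : List (Fin (p+q))) : ∀ (lJ : List (Fin (p+q))),
    P p q lJ * P p q m * ((lJ.reverse.map (fun j => cw j • cE j)).prod)
      = ((lJ.map (fun i => sgn p q i m)).prod) • P p q m := by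
  intro lJ
  induction lJ with
  | nil => simp [P_nil]
  | cons a t ih =>
    rw [List.reverse_cons, List.map_append, List.prod_append, P_cons]
    simp only [List.map_cons, List.map_nil, List.prod_cons, List.prod_nil, mul_one]
    calc cE a * P p q t * P p q m * ((t.reverse.map (fun j => cw j • cE j)).prod * (cw a • cE a))
        = cE a * (P p q t * P p q m * (t.reverse.map (fun j => cw j • cE j)).prod) * (cw a • cE a) := by
          simp only [mul_assoc]
      _ = cE a * (((t.map (fun i => sgn p q i m)).prod) • P p q m) * (cw a • cE a) := by rw [ih]
      _ = ((t.map (fun i => sgn p q i m)).prod) • (cE a * P p q m * (cw a • cE a)) := by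
          simp only [mul_smul_comm, smul_mul_assoc]
          rw [smul_comm]
      _ = ((t.map (fun i => sgn p q i m)).prod) • (sgn p q a m • P p q m) := by
          rw [conj_single]; rfl
      _ = (sgn p q a m * (t.map (fun i => sgn p q i m)).prod) • P p q m := by
          rw [smul_smul, mul_comm]

lemma sort_map_prod (J : Finset (Fin (p+q))) (f : Fin (p+q) → ℝ) :
    ((J.sort (· ≤ ·)).map f).prod = ∏ i ∈ J, f i := by
  rw [← Finset.prod_map_toList]
  exact List.Perm.prod_eq (List.Perm.map f (Finset.sort_perm_toList J (· ≤ ·)))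

/-- the averaging operator -/
def Tmap : CliffordAlgebra (cliffordQ p q) →ₗ[ℝ] CliffordAlgebra (cliffordQ p q) where
  toFun x := ∑ J : Finset (Fin (p+q)), eLower p q J * x * eUpper p q J
  map_add' x y := by simp [mul_add, add_mul, Finset.sum_add_distrib]
  map_smul' r x := by simp [mul_smul_comm, smul_mul_assoc, Finset.smul_sum]

lemma eLower_eq (J : Finset (Fin (p+q))) : eLower p q J = P p q (J.sort (· ≤ ·)) := rfl

lemma T_monomial (m : List (Fin (p+q))) :
    Tmap p q (P p q m) = (∏ i : Fin (p+q), (sgn p q i m + 1)) • P p q m := by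
  have : ∀ J : Finset (Fin (p+q)),
      eLower p q J * P p q m * eUpper p q J = (∏ i ∈ J, sgn p q i m) • P p q m := by
    intro J
    rw [eLower_eq, eUpper, conj_list, sort_map_prod]
  rw [show Tmap p q (P p q m) = ∑ J : Finset (Fin (p+q)), eLower p q J * P p q m * eUpper p q J
      from rfl]
  simp only [this, ← Finset.sum_smul]
  congr 1
  rw [Finset.prod_add]
  simp [Finset.powerset_univ]


lemma countP_ne_add_count (m : List (Fin (p+q))) (i : Fin (p+q)) :
    cnt p q i m + m.count i = m.length := by
  induction m with
  | nil => simp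
  | cons a t ih =>
    rcases eq_or_ne a i with rfl | hne
    · rw [cnt_cons_self, List.count_cons_self, List.length_cons]
      omega
    · rw [cnt_cons_ne p q hne, List.count_cons_of_ne hne, List.length_cons]
      omega

lemma sum_count_eq_length (m : List (Fin (p+q))) :
    ∑ i : Fin (p+q), m.count i = m.length := by
  induction m with
  | nil => simp
  | cons a t ih =>
    simp [List.count_cons, Finset.sum_add_distrib, ih]

lemma sgn_dichotomy (h : Even (p + q)) (m : List (Fin (p+q))) :
    (∏ i : Fin (p+q), (sgn p q i m + 1)) = 0 ∨ ∀ i, Even (m.count i) := by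
  by_cases hc : ∀ i : Fin (p+q), Even (cnt p q i m)
  · right
    rcases Nat.even_or_odd m.length with hl | hl
    · intro i
      have h1 := countP_ne_add_count p q m i
      have h2 := hc i
      rw [Nat.even_iff] at h2 hl ⊢
      omega
    · exfalso
      have hsum : (∑ i : Fin (p+q), m.count i) % 2 = (p + q) % 2 := by
        rw [Finset.sum_nat_mod]
        have : ∀ i ∈ Finset.univ, m.count i % 2 = 1 := by
          intro i _
          have h1 := countP_ne_add_count p q m i
          have h2 := hc i
          rw [Nat.even_iff] at h2
          rw [Nat.odd_iff] at hl
          omega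
        rw [Finset.sum_congr rfl this]
        simp
      rw [sum_count_eq_length] at hsum
      rw [Nat.odd_iff] at hl
      rw [Nat.even_iff] at h
      omega
  · left
    push_neg at hc
    obtain ⟨i, hi⟩ := hc
    refine Finset.prod_eq_zero (Finset.mem_univ i) ?_
    rw [sgn, (Nat.not_even_iff_odd.mp hi).neg_one_pow]
    ring

lemma first_occ {a : Fin (p+q)} : ∀ {t : List (Fin (p+q))}, a ∈ t →
    ∃ t₁ t₂, t = t₁ ++ a :: t₂ ∧ a ∉ t₁
  | b :: t, h => by
    rcases eq_or_ne b a with rfl | hba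
    · exact ⟨[], t, rfl, by simp⟩
    · have ha : a ∈ t := by
        rcases List.mem_cons.mp h with h' | h'
        · exact absurd h'.symm hba
        · exact h'
      obtain ⟨t₁, t₂, rfl, hna⟩ := first_occ ha
      exact ⟨b :: t₁, t₂, rfl, by simp [hna, Ne.symm hba]⟩

lemma scalar_of_even_counts (N : ℕ) : ∀ (m : List (Fin (p+q))), m.length ≤ N →
    (∀ i, Even (m.count i)) → ∃ r : ℝ, P p q m = r • 1 := by
  induction N with
  | zero =>
    intro m hm _
    rw [Nat.le_zero, List.length_eq_zero_iff] at hm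
    exact ⟨1, by simp [hm, P_nil]⟩
  | succ N ih =>
    rintro (_ | ⟨a, t⟩) hlen hcount
    · exact ⟨1, by simp [P_nil]⟩
    · have hat : a ∈ t := by
        have := hcount a
        rw [List.count_cons_self, Nat.even_add_one, Nat.not_even_iff_odd] at this
        have hpos : 0 < t.count a := this.pos
        exact List.count_pos_iff.mp hpos
      obtain ⟨t₁, t₂, rfl, hna⟩ := first_occ p q hat
      have key : P p q (a :: (t₁ ++ a :: t₂)) = ((-1:ℝ)^t₁.length * cw a) • P p q (t₁ ++ t₂) := by
        rw [P_cons, P_append, P_cons, P_append]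
        calc cE a * (P p q t₁ * (cE a * P p q t₂))
            = (cE a * P p q t₁) * cE a * P p q t₂ := by simp only [mul_assoc]
          _ = ((-1:ℝ)^t₁.length) • (P p q t₁ * cE a * cE a * P p q t₂) := by
              rw [comm_left p q hna]
              simp only [smul_mul_assoc]
          _ = ((-1:ℝ)^t₁.length * cw a) • (P p q t₁ * P p q t₂) := by
              rw [mul_assoc (P p q t₁), e_sq']
              simp [mul_smul_comm, smul_mul_assoc, smul_smul]
      have hcount' : ∀ i, Even ((t₁ ++ t₂).count i) := by
        intro i
        have := hcount i
        rcases eq_or_ne i a with rfl | hia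
        · rw [List.count_cons_self] at this
          simp only [List.count_append, List.count_cons_self] at this ⊢
          rw [Nat.even_iff] at this ⊢
          omega
        · rw [List.count_cons_of_ne (Ne.symm hia)] at this
          simp only [List.count_append, List.count_cons_of_ne (Ne.symm hia)] at this ⊢
          exact this
      have hlen' : (t₁ ++ t₂).length ≤ N := by
        simp only [List.length_cons, List.length_append] at hlen ⊢
        omega
      obtain ⟨r, hr⟩ := ih (t₁ ++ t₂) hlen' hcount'
      exact ⟨(-1:ℝ)^t₁.length * cw a * r, by rw [key, hr, smul_smul]⟩


lemma smul_prod_list (l : List (Fin (p+q))) :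
    (l.map (fun j => cw j • cE j)).prod = (l.map cw).prod • P p q l := by
  induction l with
  | nil => simp [P_nil]
  | cons a t ih =>
    simp only [List.map_cons, List.prod_cons, ih, P_cons]
    rw [smul_mul_assoc, mul_smul_comm, smul_smul]

lemma eUpper_eq (K : Finset (Fin (p+q))) :
    eUpper p q K = (((K.sort (· ≤ ·)).reverse.map cw).prod) •
      P p q ((K.sort (· ≤ ·)).reverse) := by
  rw [eUpper, smul_prod_list]

lemma T_one : Tmap p q 1 = ((2:ℝ)^(p+q)) • 1 := by
  have := T_monomial p q []
  rw [P_nil] at this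
  rw [this]
  congr 1
  simp [sgn]
  norm_num

lemma eUpper_mul_eLower_self (K : Finset (Fin (p+q))) :
    eUpper p q K * eLower p q K = 1 := rev_g_mul_P p q _

lemma count_sort_list (J : Finset (Fin (p+q))) (i : Fin (p+q)) :
    (J.sort (· ≤ ·)).count i = if i ∈ J then 1 else 0 := by
  split
  · exact List.count_eq_one_of_mem (Finset.sort_nodup _ _)
      ((Finset.mem_sort (α := Fin (p+q)) (· ≤ ·)).mpr (by assumption))
  · exact List.count_eq_zero.mpr (fun hmem => (by assumption : ¬ _)
      ((Finset.mem_sort (α := Fin (p+q)) (· ≤ ·)).mp hmem))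

lemma T_orth (h : Even (p + q)) {K J : Finset (Fin (p+q))} (hKJ : K ≠ J) :
    Tmap p q (eUpper p q K * eLower p q J) = 0 := by
  rw [eUpper_eq, eLower_eq, smul_mul_assoc, ← P_append, map_smul, T_monomial]
  rcases sgn_dichotomy p q h ((K.sort (· ≤ ·)).reverse ++ J.sort (· ≤ ·)) with h0 | hev
  · rw [h0, zero_smul, smul_zero]
  · exfalso
    apply hKJ
    ext i
    have := hev i
    rw [List.count_append, List.count_reverse, count_sort_list, count_sort_list] at this
    by_cases hiK : i ∈ K <;> by_cases hiJ : i ∈ J <;> simp_all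

lemma T_pair (K : Finset (Fin (p+q))) :
    Tmap p q (eUpper p q K * eLower p q K) = ((2:ℝ)^(p+q)) • 1 := by
  rw [eUpper_mul_eLower_self, T_one]


lemma sorted_insert (i : Fin (p+q)) : ∀ (m : List (Fin (p+q))), m.Pairwise (· < ·) →
    ∃ (c : ℝ) (m' : List (Fin (p+q))), m'.Pairwise (· < ·) ∧ (∀ x ∈ m', x = i ∨ x ∈ m) ∧
      cE i * P p q m = c • P p q m'
  | [], _ => ⟨1, [i], by simp, by simp, by rw [P_cons, P_nil, mul_one, one_smul]⟩
  | a :: t, hs => by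
    have hst : t.Pairwise (· < ·) := (List.pairwise_cons.mp hs).2
    have hat : ∀ x ∈ t, a < x := (List.pairwise_cons.mp hs).1
    rcases lt_trichotomy i a with hia | rfl | hai
    · refine ⟨1, i :: a :: t, ?_, ?_, ?_⟩
      · rw [List.pairwise_cons]
        exact ⟨fun b hb => lt_of_lt_of_le hia (by
          rcases List.mem_cons.mp hb with rfl | hb
          · exact le_refl _
          · exact le_of_lt (hat b hb)), hs⟩
      · intro x hx
        rcases List.mem_cons.mp hx with rfl | hx
        · exact Or.inl rfl
        · exact Or.inr hx
      · rw [one_smul, P_cons, P_cons]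
        rw [P_cons]
    · exact ⟨cw i, t, hst, fun x hx => Or.inr (List.mem_cons_of_mem _ hx), by
        rw [P_cons, ← mul_assoc, e_sq', smul_mul_assoc, one_mul]⟩
    · obtain ⟨c, t', hs', hmem', heq⟩ := sorted_insert i t hst
      refine ⟨-c, a :: t', ?_, ?_, ?_⟩
      · rw [List.pairwise_cons]
        refine ⟨fun b hb => ?_, hs'⟩
        rcases hmem' b hb with rfl | hb
        · exact hai
        · exact hat b hb
      · intro x hx
        rcases List.mem_cons.mp hx with rfl | hx
        · exact Or.inr (List.mem_cons_self)
        · rcases hmem' x hx with rfl | hx'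
          · exact Or.inl rfl
          · exact Or.inr (List.mem_cons_of_mem _ hx')
      · rw [P_cons, ← mul_assoc, e_anticomm p q (ne_of_gt hai), neg_mul, mul_assoc, heq,
          mul_smul_comm, P_cons, ← neg_smul]

lemma sorted_eq_sort {m : List (Fin (p+q))} (hm : m.Pairwise (· < ·)) :
    m.toFinset.sort (· ≤ ·) = m := by
  refine List.Perm.eq_of_pairwise' (Finset.pairwise_sort _ _) (hm.imp le_of_lt) ?_
  exact List.perm_of_nodup_nodup_toFinset_eq (Finset.sort_nodup _ _) hm.sortedLT.nodup
    (by rw [Finset.sort_toFinset])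

lemma P_sorted_mem {m : List (Fin (p+q))} (hm : m.Pairwise (· < ·)) :
    P p q m ∈ Submodule.span ℝ (Set.range (eLower p q)) := by
  have : P p q m = eLower p q m.toFinset := by rw [eLower_eq, sorted_eq_sort p q hm]
  rw [this]
  exact Submodule.subset_span (Set.mem_range_self _)

lemma mul_e_mem (i : Fin (p+q)) {x : CliffordAlgebra (cliffordQ p q)}
    (hx : x ∈ Submodule.span ℝ (Set.range (eLower p q))) :
    cE i * x ∈ Submodule.span ℝ (Set.range (eLower p q)) := by
  refine Submodule.span_induction ?_ ?_ ?_ ?_ hx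
  · rintro _ ⟨J, rfl⟩
    obtain ⟨c, m', hs', _, heq⟩ := sorted_insert p q i (J.sort (· ≤ ·)) (Finset.sortedLT_sort J).pairwise
    rw [eLower_eq, heq]
    exact Submodule.smul_mem _ _ (P_sorted_mem p q hs')
  · simp
  · intro y z _ _ hy hz
    rw [mul_add]
    exact Submodule.add_mem _ hy hz
  · intro r y _ hy
    rw [mul_smul_comm]
    exact Submodule.smul_mem _ _ hy

lemma P_mul_mem (l : List (Fin (p+q))) {x : CliffordAlgebra (cliffordQ p q)}
    (hx : x ∈ Submodule.span ℝ (Set.range (eLower p q))) :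
    P p q l * x ∈ Submodule.span ℝ (Set.range (eLower p q)) := by
  induction l with
  | nil => rw [P_nil, one_mul]; exact hx
  | cons a t ih =>
    rw [P_cons, mul_assoc]
    exact mul_e_mem p q a ih

lemma span_eLower_top : Submodule.span ℝ (Set.range (eLower p q)) = ⊤ := by
  rw [eq_top_iff]
  intro x hx
  clear hx
  induction x using CliffordAlgebra.induction with
  | algebraMap r =>
    rw [Algebra.algebraMap_eq_smul_one]
    refine Submodule.smul_mem _ _ ?_
    have : (1 : CliffordAlgebra (cliffordQ p q)) = eLower p q ∅ := by
      rw [eLower_eq, Finset.sort_empty, P_nil]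
    rw [this]
    exact Submodule.subset_span (Set.mem_range_self _)
  | ι v =>
    have : CliffordAlgebra.ι (cliffordQ p q) v = ∑ i, v i • cE i := by
      simp_rw [cliffordE, ← LinearMap.map_smul, ← map_sum]
      congr 1
      conv_lhs => rw [← Finset.univ_sum_single v]
      refine Finset.sum_congr rfl fun i _ => ?_
      rw [← Pi.single_smul, smul_eq_mul, mul_one]
    rw [this]
    refine Submodule.sum_mem _ fun i _ => Submodule.smul_mem _ _ ?_
    have : cE i = eLower p q {i} := by rw [eLower_eq, Finset.sort_singleton]; simp [P, P_cons]
    rw [this]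
    exact Submodule.subset_span (Set.mem_range_self _)
  | mul a b ha hb =>
    refine Submodule.span_induction ?_ ?_ ?_ ?_ ha
    · rintro _ ⟨J, rfl⟩
      rw [eLower_eq]
      exact P_mul_mem p q _ hb
    · simp
    · intro y z _ _ hy hz
      rw [add_mul]
      exact Submodule.add_mem _ hy hz
    · intro r y _ hy
      rw [smul_mul_assoc]
      exact Submodule.smul_mem _ _ hy
  | add a b ha hb => exact Submodule.add_mem _ ha hb


lemma T_scalar (h : Even (p+q)) (x : CliffordAlgebra (cliffordQ p q)) :
    ∃ r : ℝ, Tmap p q x = r • 1 := by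
  have hx : x ∈ Submodule.span ℝ (Set.range (eLower p q)) := by
    rw [span_eLower_top]; trivial
  refine Submodule.span_induction ?_ ?_ ?_ ?_ hx
  · rintro _ ⟨J, rfl⟩
    rw [eLower_eq, T_monomial]
    rcases sgn_dichotomy p q h (J.sort (· ≤ ·)) with h0 | hev
    · exact ⟨0, by rw [h0, zero_smul, zero_smul]⟩
    · obtain ⟨r, hr⟩ := scalar_of_even_counts p q (J.sort (· ≤ ·)).length _ le_rfl hev
      exact ⟨(∏ i, (sgn p q i (J.sort (· ≤ ·)) + 1)) * r, by rw [hr, smul_smul]⟩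
  · exact ⟨0, by simp⟩
  · rintro y z _ _ ⟨r, hr⟩ ⟨s, hs⟩
    exact ⟨r + s, by rw [map_add, hr, hs, add_smul]⟩
  · rintro d y _ ⟨r, hr⟩
    exact ⟨d * r, by rw [map_smul, hr, smul_smul]⟩

lemma T_nondeg (h : Even (p+q)) (x : CliffordAlgebra (cliffordQ p q))
    (hx : ∀ K : Finset (Fin (p+q)), Tmap p q (eUpper p q K * x) = 0) : x = 0 := by
  have hmem : x ∈ Submodule.span ℝ (Set.range (eLower p q)) := by
    rw [span_eLower_top]; trivial
  obtain ⟨c, hc⟩ := Finsupp.mem_span_range_iff_exists_finsupp.mp hmem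
  have hcK : ∀ K, c K = 0 := by
    intro K
    have h1 : Tmap p q (eUpper p q K * x) = c K • ((2:ℝ)^(p+q) • 1) := by
      rw [← hc, Finsupp.sum, Finset.mul_sum, map_sum]
      have hterm : ∀ J ∈ c.support, Tmap p q (eUpper p q K * (c J • eLower p q J))
          = if J = K then c J • ((2:ℝ)^(p+q) • (1:CliffordAlgebra (cliffordQ p q))) else 0 := by
        intro J _
        rw [mul_smul_comm, map_smul]
        split
        · next heq => subst heq; rw [T_pair]
        · next hne => rw [T_orth p q h (Ne.symm hne), smul_zero]
      rw [Finset.sum_congr rfl hterm, Finset.sum_ite_eq' c.support K]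
      split
      · rfl
      · next hK => rw [Finsupp.notMem_support_iff.mp hK, zero_smul]
    rw [hx K] at h1
    have h2 : c K * (2:ℝ)^(p+q) = 0 ∨ (1 : CliffordAlgebra (cliffordQ p q)) = 0 := by
      rw [smul_smul] at h1
      exact smul_eq_zero.mp h1.symm
    rcases h2 with h2 | h2
    · have h3 : (2:ℝ)^(p+q) ≠ 0 := by positivity
      exact (mul_eq_zero.mp h2).resolve_right h3
    · exact absurd h2 one_ne_zero
  rw [← hc]
  simp [Finsupp.sum, hcK]

end SWC


open SWC in
theorem stoneWeierstrass_clifford_even (p q : ℕ) (h : Even (p + q))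
    [TopologicalSpace (CliffordAlgebra (cliffordQ p q))]
    [IsTopologicalRing (CliffordAlgebra (cliffordQ p q))]
    [IsModuleTopology ℝ (CliffordAlgebra (cliffordQ p q))]
    (Y : Type) [TopologicalSpace Y] [CompactSpace Y] [T2Space Y]
    (A : Subalgebra ℝ C(Y, CliffordAlgebra (cliffordQ p q)))
    (hconst : ∀ c : CliffordAlgebra (cliffordQ p q), ContinuousMap.const Y c ∈ A)
    (hsep : ∀ x y : Y, x ≠ y → ∃ f ∈ A, f x ≠ f y) :
    closure (A : Set C(Y, CliffordAlgebra (cliffordQ p q))) = Set.univ := by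
  classical
  haveI hfin : Module.Finite ℝ (CliffordAlgebra (cliffordQ p q)) :=
    ⟨Submodule.fg_def.mpr ⟨Set.range (eLower p q), Set.finite_range _, span_eLower_top p q⟩⟩
  have hcontAlg : Continuous (algebraMap ℝ (CliffordAlgebra (cliffordQ p q))) :=
    IsModuleTopology.continuous_of_linearMap (Algebra.linearMap ℝ _)
  let Θ : C(Y, ℝ) →ₐ[ℝ] C(Y, CliffordAlgebra (cliffordQ p q)) :=
    (Algebra.ofId ℝ _).compLeftContinuous ℝ hcontAlg
  have hΘapp : ∀ (r : C(Y, ℝ)) (y : Y), Θ r y = algebraMap ℝ _ (r y) := fun _ _ => rfl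
  have hΘcont : Continuous Θ := by
    have heq : (fun r : C(Y, ℝ) => (Θ r : C(Y, CliffordAlgebra (cliffordQ p q))))
        = fun r => (⟨algebraMap ℝ _, hcontAlg⟩ : C(ℝ, CliffordAlgebra (cliffordQ p q))).comp r := by
      ext r y
      rfl
    have h2 := ContinuousMap.continuous_postcomp
      (⟨algebraMap ℝ _, hcontAlg⟩ : C(ℝ, CliffordAlgebra (cliffordQ p q))) (X := Y)
    show Continuous (fun r : C(Y, ℝ) => (Θ r : C(Y, CliffordAlgebra (cliffordQ p q))))
    rw [heq]
    exact h2
  obtain ⟨l₁, hl₁⟩ : ∃ l₁ : CliffordAlgebra (cliffordQ p q) →ₗ[ℝ] ℝ, l₁ 1 = 1 := by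
    let b := Module.finBasis ℝ (CliffordAlgebra (cliffordQ p q))
    have h1 : b.repr 1 ≠ 0 := by
      rw [ne_eq, LinearEquiv.map_eq_zero_iff]
      exact one_ne_zero
    obtain ⟨i₀, hi₀⟩ := Finsupp.ne_iff.mp h1
    refine ⟨(b.repr 1 i₀)⁻¹ • b.coord i₀, ?_⟩
    have : b.coord i₀ 1 = b.repr 1 i₀ := rfl
    rw [LinearMap.smul_apply, this, smul_eq_mul, inv_mul_cancel₀ (by simpa using hi₀)]
  set Abar := A.topologicalClosure with hAbar
  have hval : ∀ (f : C(Y, CliffordAlgebra (cliffordQ p q))) (K : Finset (Fin (p+q))) (y : Y),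
      (∑ J : Finset (Fin (p+q)), ContinuousMap.const Y (eLower p q J * eUpper p q K) * f *
        ContinuousMap.const Y (eUpper p q J)) y = Tmap p q (eUpper p q K * f y) := by
    intro f K y
    rw [ContinuousMap.sum_apply]
    rw [show Tmap p q (eUpper p q K * f y)
        = ∑ J : Finset (Fin (p+q)), eLower p q J * (eUpper p q K * f y) * eUpper p q J from rfl]
    refine Finset.sum_congr rfl fun J _ => ?_
    show eLower p q J * eUpper p q K * f y * eUpper p q J = _
    rw [mul_assoc (eLower p q J)]
  set S : Subalgebra ℝ C(Y, ℝ) := Abar.comap Θ with hS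
  have hSsep : S.SeparatesPoints := by
    intro x y hxy
    obtain ⟨f, hfA, hfneq⟩ := hsep x y hxy
    have hz : f x - f y ≠ 0 := sub_ne_zero.mpr hfneq
    have hK : ∃ K, Tmap p q (eUpper p q K * (f x - f y)) ≠ 0 := by
      by_contra hno
      push_neg at hno
      exact hz (T_nondeg p q h _ hno)
    obtain ⟨K, hK⟩ := hK
    let g : C(Y, CliffordAlgebra (cliffordQ p q)) :=
      ∑ J : Finset (Fin (p+q)), ContinuousMap.const Y (eLower p q J * eUpper p q K) * f *
        ContinuousMap.const Y (eUpper p q J)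
    have hgA : g ∈ A :=
      Subalgebra.sum_mem A fun J _ => A.mul_mem (A.mul_mem (hconst _) hfA) (hconst _)
    let r : C(Y, ℝ) :=
      ⟨fun y' => l₁ (g y'), (IsModuleTopology.continuous_of_linearMap l₁).comp g.continuous⟩
    have hgscal : ∀ y', g y' = Tmap p q (eUpper p q K * f y') := fun y' => hval f K y'
    have hΘr : Θ r = g := by
      ext y'
      rw [hΘapp]
      obtain ⟨s, hs⟩ := T_scalar p q h (eUpper p q K * f y')
      have hgy : g y' = s • 1 := by rw [hgscal y', hs]
      show algebraMap ℝ _ (l₁ (g y')) = g y'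
      rw [hgy, map_smul, hl₁, smul_eq_mul, mul_one, Algebra.algebraMap_eq_smul_one]
    have hrS : r ∈ S := by
      rw [hS]
      show Θ r ∈ Abar
      rw [hΘr]
      exact A.le_topologicalClosure hgA
    refine ⟨(r : Y → ℝ), ⟨r, hrS, rfl⟩, ?_⟩
    intro hre
    apply hK
    have hx' : r x = l₁ (g x) := rfl
    have hy' : r y = l₁ (g y) := rfl
    obtain ⟨sx, hsx⟩ := T_scalar p q h (eUpper p q K * f x)
    obtain ⟨sy, hsy⟩ := T_scalar p q h (eUpper p q K * f y)
    have hgx : g x = sx • 1 := by rw [hgscal x, hsx]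
    have hgy : g y = sy • 1 := by rw [hgscal y, hsy]
    have hsxy : sx = sy := by
      have := hre
      rw [hx', hy', hgx, hgy, map_smul, map_smul, hl₁, smul_eq_mul, smul_eq_mul, mul_one,
        mul_one] at this
      exact this
    have : Tmap p q (eUpper p q K * f x) = Tmap p q (eUpper p q K * f y) := by
      rw [hsx, hsy, hsxy]
    rw [mul_sub, map_sub, this, sub_self]
  have hStop : S.topologicalClosure = ⊤ :=
    ContinuousMap.subalgebra_topologicalClosure_eq_top_of_separatesPoints S hSsep
  have hSclosed : IsClosed (S : Set C(Y, ℝ)) :=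
    (A.isClosed_topologicalClosure).preimage hΘcont
  have hSall : ∀ r : C(Y, ℝ), Θ r ∈ Abar := by
    intro r
    have h1 : r ∈ S.topologicalClosure := hStop ▸ Algebra.mem_top
    have h2 : S.topologicalClosure ≤ S := S.topologicalClosure_minimal le_rfl hSclosed
    exact h2 h1
  have hmain : ∀ f : C(Y, CliffordAlgebra (cliffordQ p q)), f ∈ Abar := by
    intro f
    let b := Module.finBasis ℝ (CliffordAlgebra (cliffordQ p q))
    have hfeq : f = ∑ i, Θ ⟨fun y' => b.repr (f y') i,
        (IsModuleTopology.continuous_of_linearMap (b.coord i)).comp f.continuous⟩ *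
        ContinuousMap.const Y (b i) := by
      ext y'
      rw [ContinuousMap.sum_apply]
      have : ∀ i, (Θ ⟨fun y'' => b.repr (f y'') i,
          (IsModuleTopology.continuous_of_linearMap (b.coord i)).comp f.continuous⟩ *
          ContinuousMap.const Y (b i)) y'
          = b.repr (f y') i • b i := by
        intro i
        show algebraMap ℝ _ (b.repr (f y') i) * b i = _
        rw [Algebra.algebraMap_eq_smul_one, smul_mul_assoc, one_mul]
      rw [Finset.sum_congr rfl (fun i _ => this i)]
      exact (b.sum_repr (f y')).symm
    rw [hfeq]
    exact Subalgebra.sum_mem _ fun i _ => Abar.mul_mem (hSall _) (A.le_topologicalClosure (hconst _))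
  have huniv : (Abar : Set C(Y, CliffordAlgebra (cliffordQ p q))) = Set.univ :=
    Set.eq_univ_of_forall hmain
  rw [← Subalgebra.topologicalClosure_coe, ← hAbar, huniv]
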